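/- For any two density operators ρ and σ on a finite-dimensional Hilbert space and any real n ≥ 1, |Tr(ρ^n) − Tr(σ^n)| ≤ n · ‖ρ − σ‖_1, where ‖·‖_1 denotes the trace norm. -/

import Mathlib

open Matrix
open scoped ComplexOrder

/-- The square root of a positive semidefinite matrix, as `Matrix.PosSemidef.sqrt` was defined
in the older Mathlib (removed since). -/
noncomputable def posSemidefSqrt {m : Type*} [Fintype m] [DecidableEq m] {A : Matrix m m ℂ}
    (hA : A.PosSemidef) : Matrix m m ℂ :=
  hA.1.eigenvectorUnitary.1 * diagonal ((↑) ∘ (Real.sqrt ·) ∘ hA.1.eigenvalues) *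
    (star hA.1.eigenvectorUnitary : Matrix m m ℂ)

/-- Trace norm `‖A‖₁ = Tr √(AᴴA)`. -/
noncomputable def trNorm {m : Type*} [Fintype m] [DecidableEq m] (A : Matrix m m ℂ) : ℝ :=
  (posSemidefSqrt (Matrix.posSemidef_conjTranspose_mul_self A)).trace.re

/-- `Tr(A^r)` for real `r`, defined via the functional calculus:
for a Hermitian matrix it is the sum of the `r`-th powers (`Real.rpow`) of the
eigenvalues (with `0^r = 0` for `r > 0`). -/
noncomputable def trRpow {m : Type*} [Fintype m] [DecidableEq m]
    (A : Matrix m m ℂ) (r : ℝ) : ℝ :=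
  if h : A.IsHermitian then ∑ i, (h.eigenvalues i) ^ r else 0

section Aux

variable {d : ℕ}

private lemma entry_conj' (W : Matrix (Fin d) (Fin d) ℂ) (f : Fin d → ℝ) (i : Fin d) :
    (W * Matrix.diagonal ((RCLike.ofReal ∘ f) : Fin d → ℂ) * star W) i i
      = ((∑ j, ‖W i j‖ ^ 2 * f j : ℝ) : ℂ) := by
  rw [Matrix.star_eq_conjTranspose, Matrix.mul_apply]
  push_cast
  refine Finset.sum_congr rfl fun j _ => ?_
  rw [Matrix.mul_diagonal, Matrix.conjTranspose_apply]
  simp only [Function.comp_apply, RCLike.ofReal_alg, Complex.star_def, Complex.real_smul, mul_one]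
  rw [show W i j * (f j : ℂ) * (starRingEnd ℂ) (W i j)
      = (W i j * (starRingEnd ℂ) (W i j)) * (f j : ℂ) by ring, Complex.mul_conj']
  try push_cast
  try ring

private lemma rowsum {W : Matrix (Fin d) (Fin d) ℂ} (hW : W * star W = 1) (i : Fin d) :
    ∑ j, ‖W i j‖ ^ 2 = 1 := by
  have h := congrFun (congrFun hW i) i
  rw [Matrix.mul_apply] at h
  simp only [Matrix.star_eq_conjTranspose, Matrix.conjTranspose_apply, Matrix.one_apply_eq] at h
  have : (((∑ j, ‖W i j‖ ^ 2 : ℝ)) : ℂ) = 1 := by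
    push_cast
    rw [← h]
    refine Finset.sum_congr rfl fun j _ => ?_
    rw [← Complex.mul_conj']
    simp [Complex.star_def]
  exact_mod_cast this

private lemma colsum {W : Matrix (Fin d) (Fin d) ℂ} (hW : star W * W = 1) (j : Fin d) :
    ∑ i, ‖W i j‖ ^ 2 = 1 := by
  have h := congrFun (congrFun hW j) j
  rw [Matrix.mul_apply] at h
  simp only [Matrix.star_eq_conjTranspose, Matrix.conjTranspose_apply, Matrix.one_apply_eq] at h
  have : (((∑ i, ‖W i j‖ ^ 2 : ℝ)) : ℂ) = 1 := by
    push_cast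
    rw [← h]
    refine Finset.sum_congr rfl fun i _ => ?_
    rw [← Complex.mul_conj']
    simp [Complex.star_def, mul_comm]
  exact_mod_cast this

private lemma rpow_conv {n : ℝ} (hn : 1 ≤ n) {a b : ℝ} (ha : 0 ≤ a) (hb : 0 ≤ b) :
    a ^ n - b ^ n ≤ n * a ^ (n - 1) * (a - b) := by
  rcases eq_or_lt_of_le ha with h0 | ha'
  · rw [← h0]
    rcases eq_or_lt_of_le hn with h1 | h1
    · rw [← h1]
      simp [Real.rpow_one, Real.rpow_zero]
    · rw [Real.zero_rpow (by linarith), Real.zero_rpow (by linarith)]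
      have := Real.rpow_nonneg hb n
      nlinarith
  · have key := one_add_mul_self_le_rpow_one_add (s := (b - a) / a) (by
      rw [le_div_iff₀ ha']; linarith) hn
    have h1 : 1 + (b - a) / a = b / a := by field_simp; ring
    rw [h1, Real.div_rpow hb ha'.le] at key
    have hAn : (0:ℝ) < a ^ n := Real.rpow_pos_of_pos ha' n
    have hpow : a ^ (n - 1) * a = a ^ n := by
      rw [Real.rpow_sub ha', Real.rpow_one]
      field_simp
    have := mul_le_mul_of_nonneg_left key hAn.le
    rw [mul_div_cancel₀ _ (ne_of_gt hAn)] at this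
    have hdiv : a ^ n * (n * ((b - a) / a)) = n * (b - a) * a ^ (n - 1) := by
      rw [← hpow]
      field_simp
    rw [mul_add, mul_one, hdiv] at this
    have h3 : n * a ^ (n - 1) * (a - b) = -(n * (b - a) * a ^ (n - 1)) := by ring
    rw [h3]
    linarith [this]

/-- The purely real combinatorial core of the argument. -/
private lemma core_ineq (a b c : Fin d → ℝ) (P Q : Fin d → Fin d → ℝ)
    (hPnn : ∀ i j, 0 ≤ P i j) (hQnn : ∀ i k, 0 ≤ Q i k)
    (hProw : ∀ i, ∑ j, P i j = 1) (hPcol : ∀ j, ∑ i, P i j = 1)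
    (hQcol : ∀ k, ∑ i, Q i k = 1)
    (ha0 : ∀ i, 0 ≤ a i) (ha1 : ∀ i, a i ≤ 1) (hb0 : ∀ j, 0 ≤ b j)
    (hD : ∀ i, a i - ∑ j, P i j * b j = ∑ k, Q i k * c k)
    (n : ℝ) (hn : 1 ≤ n) :
    ∑ i, a i ^ n - ∑ j, b j ^ n ≤ n * ∑ k, |c k| := by
  set D : Fin d → ℝ := fun i => ∑ k, Q i k * c k with hDdef
  have e1 : ∑ i, a i ^ n = ∑ i, ∑ j, P i j * a i ^ n := by
    refine Finset.sum_congr rfl fun i _ => ?_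
    rw [← Finset.sum_mul, hProw i, one_mul]
  have e2 : ∑ i, ∑ j, P i j * b j ^ n = ∑ j, b j ^ n := by
    rw [Finset.sum_comm]
    refine Finset.sum_congr rfl fun j _ => ?_
    rw [← Finset.sum_mul, hPcol j, one_mul]
  calc ∑ i, a i ^ n - ∑ j, b j ^ n
      = ∑ i, ∑ j, P i j * (a i ^ n - b j ^ n) := by
        rw [e1, ← e2, ← Finset.sum_sub_distrib]
        refine Finset.sum_congr rfl fun i _ => ?_
        rw [← Finset.sum_sub_distrib]
        refine Finset.sum_congr rfl fun j _ => ?_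
        ring
    _ ≤ ∑ i, ∑ j, P i j * (n * a i ^ (n - 1) * (a i - b j)) := by
        refine Finset.sum_le_sum fun i _ => Finset.sum_le_sum fun j _ => ?_
        exact mul_le_mul_of_nonneg_left (rpow_conv hn (ha0 i) (hb0 j)) (hPnn i j)
    _ = ∑ i, n * a i ^ (n - 1) * D i := by
        refine Finset.sum_congr rfl fun i _ => ?_
        have h1 : ∑ j, P i j * a i = a i := by rw [← Finset.sum_mul, hProw i, one_mul]
        calc ∑ j, P i j * (n * a i ^ (n - 1) * (a i - b j))
            = n * a i ^ (n - 1) * ((∑ j, P i j * a i) - ∑ j, P i j * b j) := by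
              rw [← Finset.sum_sub_distrib, Finset.mul_sum]
              exact Finset.sum_congr rfl fun j _ => by ring
          _ = n * a i ^ (n - 1) * (a i - ∑ j, P i j * b j) := by rw [h1]
          _ = n * a i ^ (n - 1) * D i := by rw [hD i]
    _ ≤ ∑ i, n * |D i| := by
        refine Finset.sum_le_sum fun i _ => ?_
        have h1 : a i ^ (n - 1) ≤ 1 := Real.rpow_le_one (ha0 i) (ha1 i) (by linarith)
        have h2 : 0 ≤ a i ^ (n - 1) := Real.rpow_nonneg (ha0 i) _
        have h3 : D i ≤ |D i| := le_abs_self _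
        have h4 : 0 ≤ |D i| := abs_nonneg _
        nlinarith [mul_nonneg (mul_nonneg (by linarith : (0:ℝ) ≤ n) h2) (sub_nonneg.mpr h3),
          mul_nonneg (by linarith : (0:ℝ) ≤ n) (mul_nonneg (sub_nonneg.mpr h1) h4)]
    _ = n * ∑ i, |D i| := by rw [Finset.mul_sum]
    _ ≤ n * ∑ k, |c k| := by
        refine mul_le_mul_of_nonneg_left ?_ (by linarith)
        calc ∑ i, |D i| ≤ ∑ i, ∑ k, Q i k * |c k| := by
              refine Finset.sum_le_sum fun i _ => ?_
              refine (Finset.abs_sum_le_sum_abs _ _).trans ?_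
              refine Finset.sum_le_sum fun k _ => ?_
              rw [abs_mul, abs_of_nonneg (hQnn i k)]
          _ = ∑ k, |c k| := by
              rw [Finset.sum_comm]
              refine Finset.sum_congr rfl fun k _ => ?_
              rw [← Finset.sum_mul, hQcol k, one_mul]

private lemma trace_eq_sum_eig {A : Matrix (Fin d) (Fin d) ℂ} (hA : A.IsHermitian) :
    A.trace = ∑ i, (hA.eigenvalues i : ℂ) := by
  have hUU : star (hA.eigenvectorUnitary : Matrix (Fin d) (Fin d) ℂ)
      * (hA.eigenvectorUnitary : Matrix (Fin d) (Fin d) ℂ) = 1 :=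
    Matrix.mem_unitaryGroup_iff'.mp hA.eigenvectorUnitary.2
  conv_lhs => rw [hA.spectral_theorem, Unitary.conjStarAlgAut_apply]
  rw [Matrix.trace_mul_cycle, hUU, Matrix.one_mul, Matrix.trace_diagonal]
  simp

open scoped MatrixOrder in
private lemma posSemidefSqrt_eq_of_sq {A M : Matrix (Fin d) (Fin d) ℂ} (hA : A.PosSemidef)
    (hM : M.PosSemidef) (h : M ^ 2 = A) : M = posSemidefSqrt hA := by
  have e1 : posSemidefSqrt hA = cfc Real.sqrt A := by
    rw [hA.1.cfc_eq]
    rfl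
  rw [e1, ← cfcₙ_eq_cfc (hf0 := Real.sqrt_zero), ← CFC.sqrt_eq_real_sqrt A hA.nonneg,
    CFC.sqrt_unique (by rw [← sq]; exact h) hM.nonneg]

private lemma trNorm_eq_sum_abs {C : Matrix (Fin d) (Fin d) ℂ} (hC : C.IsHermitian) :
    trNorm C = ∑ k, |hC.eigenvalues k| := by
  set X : Matrix (Fin d) (Fin d) ℂ := (hC.eigenvectorUnitary : Matrix (Fin d) (Fin d) ℂ) with hXdef
  have hXu : X ∈ Matrix.unitaryGroup (Fin d) ℂ := hC.eigenvectorUnitary.2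
  have hXX : Xᴴ * X = 1 := Matrix.mem_unitaryGroup_iff'.mp hXu
  set Dabs : Matrix (Fin d) (Fin d) ℂ :=
    Matrix.diagonal ((RCLike.ofReal ∘ fun k => |hC.eigenvalues k|) : Fin d → ℂ) with hDabs
  set D : Matrix (Fin d) (Fin d) ℂ :=
    Matrix.diagonal ((RCLike.ofReal ∘ hC.eigenvalues) : Fin d → ℂ) with hDdef
  have conj_mul : ∀ D1 D2 : Matrix (Fin d) (Fin d) ℂ,
      (X * D1 * Xᴴ) * (X * D2 * Xᴴ) = X * (D1 * D2) * Xᴴ := by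
    intro D1 D2
    simp only [← Matrix.mul_assoc]
    rw [Matrix.mul_assoc (X * D1) Xᴴ X, hXX, Matrix.mul_one]
  have habs : Dabs * Dabs = D * D := by
    rw [hDabs, hDdef, Matrix.diagonal_mul_diagonal, Matrix.diagonal_mul_diagonal]
    refine congrArg Matrix.diagonal (funext fun k => ?_)
    simp only [Function.comp_apply, RCLike.ofReal_alg, Complex.real_smul, mul_one]
    rw [← Complex.ofReal_mul, ← Complex.ofReal_mul, abs_mul_abs_self]
  set M : Matrix (Fin d) (Fin d) ℂ := X * Dabs * Xᴴ with hMdef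
  have hMps : M.PosSemidef := by
    apply Matrix.PosSemidef.mul_mul_conjTranspose_same
    refine Matrix.posSemidef_diagonal_iff.mpr fun k => ?_
    simp only [Function.comp_apply]
    exact Complex.zero_le_real.mpr (abs_nonneg _)
  have hspec : C = X * D * Xᴴ := hC.spectral_theorem
  have hM2 : M ^ 2 = Cᴴ * C := by
    rw [pow_two, hMdef, conj_mul, habs, ← conj_mul, ← hspec, hC.eq]
  have hMeq : M = posSemidefSqrt (Matrix.posSemidef_conjTranspose_mul_self C) :=
    posSemidefSqrt_eq_of_sq _ hMps hM2
  rw [trNorm, ← hMeq, hMdef, Matrix.trace_mul_cycle, hXX, Matrix.one_mul,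
    hDabs, Matrix.trace_diagonal]
  simp

private lemma trNorm_sub_comm (A B : Matrix (Fin d) (Fin d) ℂ) :
    trNorm (A - B) = trNorm (B - A) := by
  have h : (A - B)ᴴ * (A - B) = (B - A)ᴴ * (B - A) := by
    rw [show B - A = -(A - B) from (neg_sub A B).symm, Matrix.conjTranspose_neg, Matrix.neg_mul,
      Matrix.mul_neg, neg_neg]
  have hc : ∀ (X Y : Matrix (Fin d) (Fin d) ℂ) (hX : X.PosSemidef) (hY : Y.PosSemidef),
      X = Y → posSemidefSqrt hX = posSemidefSqrt hY := by
    rintro X _ hX hY rfl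
    rfl
  rw [trNorm, trNorm, hc _ _ _ (Matrix.posSemidef_conjTranspose_mul_self (B - A)) h]

private lemma diag_entry_eq {A : Matrix (Fin d) (Fin d) ℂ} (hA : A.IsHermitian)
    (N : Matrix (Fin d) (Fin d) ℂ) (i : Fin d) :
    (star N * A * N) i i
      = ((∑ j, ‖(star N * (hA.eigenvectorUnitary : Matrix (Fin d) (Fin d) ℂ)) i j‖ ^ 2
            * hA.eigenvalues j : ℝ) : ℂ) := by
  have h : star N * A * N
      = (star N * (hA.eigenvectorUnitary : Matrix (Fin d) (Fin d) ℂ))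
        * Matrix.diagonal ((RCLike.ofReal ∘ hA.eigenvalues) : Fin d → ℂ)
        * star (star N * (hA.eigenvectorUnitary : Matrix (Fin d) (Fin d) ℂ)) := by
    conv_lhs => rw [hA.spectral_theorem, Unitary.conjStarAlgAut_apply]
    rw [Matrix.star_mul, star_star]
    simp only [Matrix.mul_assoc]
  rw [h, entry_conj']

private lemma key_one_sided (ρ σ : Matrix (Fin d) (Fin d) ℂ)
    (hρ : ρ.PosSemidef) (hσ : σ.PosSemidef) (htrρ : ρ.trace = 1)
    (n : ℝ) (hn : 1 ≤ n) :
    trRpow ρ n - trRpow σ n ≤ n * trNorm (ρ - σ) := by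
  have hA : ρ.IsHermitian := hρ.isHermitian
  have hB : σ.IsHermitian := hσ.isHermitian
  have hC : (ρ - σ).IsHermitian := hA.sub hB
  have hUu : (hA.eigenvectorUnitary : Matrix (Fin d) (Fin d) ℂ) ∈ Matrix.unitaryGroup (Fin d) ℂ :=
    hA.eigenvectorUnitary.2
  have hVu : (hB.eigenvectorUnitary : Matrix (Fin d) (Fin d) ℂ) ∈ Matrix.unitaryGroup (Fin d) ℂ :=
    hB.eigenvectorUnitary.2
  have hXu : (hC.eigenvectorUnitary : Matrix (Fin d) (Fin d) ℂ) ∈ Matrix.unitaryGroup (Fin d) ℂ :=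
    hC.eigenvectorUnitary.2
  have hWr : (star (hA.eigenvectorUnitary : Matrix (Fin d) (Fin d) ℂ)
        * (hB.eigenvectorUnitary : Matrix (Fin d) (Fin d) ℂ))
      * star (star (hA.eigenvectorUnitary : Matrix (Fin d) (Fin d) ℂ)
        * (hB.eigenvectorUnitary : Matrix (Fin d) (Fin d) ℂ)) = 1 := by
    rw [Matrix.star_mul, star_star, Matrix.mul_assoc, ← Matrix.mul_assoc
      (hB.eigenvectorUnitary : Matrix (Fin d) (Fin d) ℂ),
      Matrix.mem_unitaryGroup_iff.mp hVu, Matrix.one_mul,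
      Matrix.mem_unitaryGroup_iff'.mp hUu]
  have hWc : star (star (hA.eigenvectorUnitary : Matrix (Fin d) (Fin d) ℂ)
        * (hB.eigenvectorUnitary : Matrix (Fin d) (Fin d) ℂ))
      * (star (hA.eigenvectorUnitary : Matrix (Fin d) (Fin d) ℂ)
        * (hB.eigenvectorUnitary : Matrix (Fin d) (Fin d) ℂ)) = 1 := by
    rw [Matrix.star_mul, star_star, Matrix.mul_assoc, ← Matrix.mul_assoc
      (hA.eigenvectorUnitary : Matrix (Fin d) (Fin d) ℂ),
      Matrix.mem_unitaryGroup_iff.mp hUu, Matrix.one_mul,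
      Matrix.mem_unitaryGroup_iff'.mp hVu]
  have hYc : star (star (hA.eigenvectorUnitary : Matrix (Fin d) (Fin d) ℂ)
        * (hC.eigenvectorUnitary : Matrix (Fin d) (Fin d) ℂ))
      * (star (hA.eigenvectorUnitary : Matrix (Fin d) (Fin d) ℂ)
        * (hC.eigenvectorUnitary : Matrix (Fin d) (Fin d) ℂ)) = 1 := by
    rw [Matrix.star_mul, star_star, Matrix.mul_assoc, ← Matrix.mul_assoc
      (hA.eigenvectorUnitary : Matrix (Fin d) (Fin d) ℂ),
      Matrix.mem_unitaryGroup_iff.mp hUu, Matrix.one_mul,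
      Matrix.mem_unitaryGroup_iff'.mp hXu]
  have hdiagA : ∀ i, (star (hA.eigenvectorUnitary : Matrix (Fin d) (Fin d) ℂ) * ρ
      * (hA.eigenvectorUnitary : Matrix (Fin d) (Fin d) ℂ)) i i = ((hA.eigenvalues i : ℝ) : ℂ) := by
    intro i
    have h := hA.conjStarAlgAut_star_eigenvectorUnitary
    simp only [Unitary.conjStarAlgAut_apply, Unitary.coe_star, star_star] at h
    exact (congrFun (congrFun h i) i).trans (Matrix.diagonal_apply_eq _ i)
  have hD : ∀ i, hA.eigenvalues i
      - ∑ j, ‖(star (hA.eigenvectorUnitary : Matrix (Fin d) (Fin d) ℂ)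
          * (hB.eigenvectorUnitary : Matrix (Fin d) (Fin d) ℂ)) i j‖ ^ 2 * hB.eigenvalues j
      = ∑ k, ‖(star (hA.eigenvectorUnitary : Matrix (Fin d) (Fin d) ℂ)
          * (hC.eigenvectorUnitary : Matrix (Fin d) (Fin d) ℂ)) i k‖ ^ 2 * hC.eigenvalues k := by
    intro i
    have hlin : (star (hA.eigenvectorUnitary : Matrix (Fin d) (Fin d) ℂ) * (ρ - σ)
          * (hA.eigenvectorUnitary : Matrix (Fin d) (Fin d) ℂ)) i i
        = (star (hA.eigenvectorUnitary : Matrix (Fin d) (Fin d) ℂ) * ρ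
          * (hA.eigenvectorUnitary : Matrix (Fin d) (Fin d) ℂ)) i i
          - (star (hA.eigenvectorUnitary : Matrix (Fin d) (Fin d) ℂ) * σ
          * (hA.eigenvectorUnitary : Matrix (Fin d) (Fin d) ℂ)) i i := by
      simp [Matrix.mul_sub, Matrix.sub_mul, Matrix.sub_apply]
    rw [diag_entry_eq hC _ i, hdiagA i,
      diag_entry_eq hB (hA.eigenvectorUnitary : Matrix (Fin d) (Fin d) ℂ) i] at hlin
    exact_mod_cast hlin.symm
  have hsum_a : ∑ i, hA.eigenvalues i = 1 := by
    have h := trace_eq_sum_eig hA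
    rw [htrρ] at h
    exact_mod_cast h.symm
  have ha1 : ∀ i, hA.eigenvalues i ≤ 1 := by
    intro i
    rw [← hsum_a]
    exact Finset.single_le_sum (fun j _ => hρ.eigenvalues_nonneg j) (Finset.mem_univ i)
  have main := core_ineq hA.eigenvalues hB.eigenvalues hC.eigenvalues
    (fun i j => ‖(star (hA.eigenvectorUnitary : Matrix (Fin d) (Fin d) ℂ)
        * (hB.eigenvectorUnitary : Matrix (Fin d) (Fin d) ℂ)) i j‖ ^ 2)
    (fun i k => ‖(star (hA.eigenvectorUnitary : Matrix (Fin d) (Fin d) ℂ)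
        * (hC.eigenvectorUnitary : Matrix (Fin d) (Fin d) ℂ)) i k‖ ^ 2)
    (fun i j => by positivity) (fun i k => by positivity)
    (fun i => rowsum hWr i) (fun j => colsum hWc j) (fun k => colsum hYc k)
    (fun i => hρ.eigenvalues_nonneg i) ha1 (fun j => hσ.eigenvalues_nonneg j)
    hD n hn
  have ea : trRpow ρ n = ∑ i, hA.eigenvalues i ^ n := by
    unfold trRpow
    rw [dif_pos hA]
  have eb : trRpow σ n = ∑ j, hB.eigenvalues j ^ n := by
    unfold trRpow
    rw [dif_pos hB]
  rw [ea, eb, trNorm_eq_sum_abs hC]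
  exact main

end Aux

/-- for density operators `ρ, σ` and real `n ≥ 1`,
`|Tr(ρ^n) − Tr(σ^n)| ≤ n ⬝ ‖ρ − σ‖₁`. -/
theorem abs_trace_rpow_sub_le
    (d : ℕ) (ρ σ : Matrix (Fin d) (Fin d) ℂ)
    (hρ : ρ.PosSemidef) (hσ : σ.PosSemidef)
    (htrρ : ρ.trace = 1) (htrσ : σ.trace = 1)
    (n : ℝ) (hn : 1 ≤ n) :
    |trRpow ρ n - trRpow σ n| ≤ n * trNorm (ρ - σ) := by
  refine abs_sub_le_iff.mpr ⟨key_one_sided ρ σ hρ hσ htrρ n hn, ?_⟩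
  have h := key_one_sided σ ρ hσ hρ htrσ n hn
  rwa [trNorm_sub_comm σ ρ] at h
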